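/- Let a, b be integers, c a natural number, and z₁, z₂ complex numbers with |z₁| > |z₂| > 0. Then the series ∑_{l=0}^{∞} (−1)^{l} · C(−b−1, l) · C(c−a−l, c) · z₁^{−b−1−l} · z₂^{a−c+l−1} converges absolutely, and its sum equals the finite sum ∑_{k=0}^{c} C(k−a, k) · C(−b−1, c−k) · z₂^{a−k−1} · (z₁−z₂)^{−b−1−c+k}. (Note that |z₁| > |z₂| forces z₁ ≠ 0 and z₁ ≠ z₂, so all the integer powers appearing are defined.) -/

import Mathlib

/-- The generalized binomial coefficient `C(n, j) = n(n-1)⋯(n-j+1)/j!`,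
regarded as a complex number (equal to `1` when `j = 0`). -/
noncomputable def cbinom (n : ℤ) (j : ℕ) : ℂ :=
  (∏ i ∈ Finset.range j, ((n : ℂ) - (i : ℂ))) / (Nat.factorial j : ℂ)

open Finset

lemma descPochhammer_smeval_prod (x : ℂ) : ∀ j : ℕ,
    (descPochhammer ℤ j).smeval x = ∏ i ∈ range j, (x - (i : ℂ))
  | 0 => by simp [descPochhammer]
  | (j+1) => by
    rw [descPochhammer_succ_right, Polynomial.smeval_mul, descPochhammer_smeval_prod x j,
      prod_range_succ, Polynomial.smeval_sub, Polynomial.smeval_X, Polynomial.smeval_natCast]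
    simp

lemma cbinom_eq_choose (n : ℤ) (j : ℕ) : cbinom n j = Ring.choose (n : ℂ) j := by
  have h := Ring.descPochhammer_eq_factorial_smul_choose (R := ℂ) (n : ℂ) j
  rw [descPochhammer_smeval_prod, nsmul_eq_mul] at h
  rw [cbinom, h]
  exact mul_div_cancel_left₀ _ (by exact_mod_cast Nat.factorial_ne_zero j)

lemma cbinom_natCast (N j : ℕ) : cbinom (N : ℤ) j = (N.choose j : ℂ) := by
  rw [cbinom_eq_choose]
  push_cast
  rw [Ring.choose_natCast]

lemma cbinom_zero (n : ℤ) : cbinom n 0 = 1 := by simp [cbinom]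

lemma cbinom_neg (n : ℤ) (j : ℕ) :
    cbinom n j = (-1) ^ j * cbinom ((j : ℤ) - n - 1) j := by
  unfold cbinom
  rw [← mul_div_assoc]
  congr 1
  have h := prod_range_reflect (fun i : ℕ => (((j : ℤ) - n - 1 : ℤ) : ℂ) - (i : ℂ)) j
  rw [← h]
  have hc : ((-1 : ℂ)) ^ j * ∏ i ∈ range j, ((((j : ℤ) - n - 1 : ℤ) : ℂ) - ((j - 1 - i : ℕ) : ℂ))
      = ∏ i ∈ range j, (-1 * ((((j : ℤ) - n - 1 : ℤ) : ℂ) - ((j - 1 - i : ℕ) : ℂ))) := by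
    rw [prod_mul_distrib, prod_const, card_range]
  rw [hc]
  refine prod_congr rfl fun i hi => ?_
  rw [mem_range] at hi
  have : ((j - 1 - i : ℕ) : ℂ) = (j : ℂ) - 1 - (i : ℂ) := by
    rw [Nat.cast_sub (by omega : i ≤ j - 1), Nat.cast_sub (by omega : 1 ≤ j)]
    push_cast
    ring
  rw [this]
  push_cast
  ring

lemma cbinom_trinom (r : ℤ) (l j : ℕ) :
    cbinom r l * cbinom (r - (l : ℤ)) j = ((l + j).choose l : ℂ) * cbinom r (l + j) := by
  simp only [cbinom_eq_choose]
  push_cast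
  have h := Ring.choose_smul_choose ((r : ℂ)) (n := l + j) (k := l) (Nat.le_add_right l j)
  rw [Nat.add_sub_cancel_left] at h
  rw [← h, nsmul_eq_mul]

lemma cbinom_vandermonde (x y : ℤ) (c : ℕ) :
    ∑ k ∈ range (c + 1), cbinom x k * cbinom y (c - k) = cbinom (x + y) c := by
  simp only [cbinom_eq_choose]
  push_cast
  rw [Ring.add_choose_eq c (Commute.all _ _), Finset.Nat.sum_antidiagonal_eq_sum_range_succ_mk]

lemma cbinom_neg_nat (n l : ℕ) :
    cbinom (-(n : ℤ) - 1) l = (-1) ^ l * ((l + n).choose n : ℂ) := by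
  rw [cbinom_neg]
  congr 1
  have h : (l : ℤ) - (-(n : ℤ) - 1) - 1 = ((l + n : ℕ) : ℤ) := by push_cast; ring
  rw [h, cbinom_natCast]
  norm_cast
  rw [← Nat.choose_symm (Nat.le_add_right l n)]
  congr 1
  omega

lemma cbinom_nat_eq_zero {N j : ℕ} (h : N < j) : cbinom (N : ℤ) j = 0 := by
  rw [cbinom_natCast, Nat.choose_eq_zero_of_lt h, Nat.cast_zero]

lemma hasSum_cbinom (m : ℤ) {x : ℂ} (hx : ‖x‖ < 1) :
    HasSum (fun l : ℕ => cbinom m l * x ^ l) ((1 + x) ^ m) := by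
  have h1x : (1 : ℂ) + x ≠ 0 := by
    intro h
    have : ‖x‖ = 1 := by
      have : x = -1 := by linear_combination h
      simp [this]
    linarith
  rcases le_or_gt 0 m with hm | hm
  · lift m to ℕ using hm
    have hfin : ∀ l ∉ range (m + 1), cbinom (m : ℤ) l * x ^ l = 0 := by
      intro l hl
      rw [mem_range, not_lt] at hl
      rw [cbinom_nat_eq_zero (by omega), zero_mul]
    have hs : HasSum _ _ := hasSum_sum_of_ne_finset_zero hfin
    convert hs using 1
    rw [zpow_natCast]
    rw [add_comm (1 : ℂ) x, add_pow]
    refine Finset.sum_congr rfl fun k hk => ?_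
    rw [cbinom_natCast]
    ring
  · obtain ⟨n, hn⟩ : ∃ n : ℕ, m = -(n : ℤ) - 1 := ⟨(-m - 1).toNat, by omega⟩
    subst hn
    have hx' : ‖-x‖ < 1 := by rwa [norm_neg]
    have hs := hasSum_choose_mul_geometric_of_norm_lt_one (𝕜 := ℂ) n hx'
    have h2 : (1 : ℂ) - -x = 1 + x := by ring
    rw [h2] at hs
    have key : (fun l : ℕ => cbinom (-(n : ℤ) - 1) l * x ^ l)
        = fun l : ℕ => ((l + n).choose n : ℂ) * (-x) ^ l := by
      funext l
      rw [cbinom_neg_nat, neg_pow]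
      ring
    rw [key]
    convert hs using 1
    · rfl
    rw [zpow_sub₀ h1x, zpow_neg, zpow_natCast, zpow_one, one_div, div_eq_mul_inv, ← mul_inv,
      ← pow_succ]

lemma summable_norm_cbinom (m : ℤ) {x : ℂ} (hx : ‖x‖ < 1) :
    Summable (fun l : ℕ => ‖cbinom m l * x ^ l‖) := by
  rcases le_or_gt 0 m with hm | hm
  · lift m to ℕ using hm
    apply summable_of_ne_finset_zero (s := range (m + 1))
    intro l hl
    rw [mem_range, not_lt] at hl
    rw [cbinom_nat_eq_zero (by omega), zero_mul, norm_zero]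
  · obtain ⟨n, hn⟩ : ∃ n : ℕ, m = -(n : ℤ) - 1 := ⟨(-m - 1).toNat, by omega⟩
    subst hn
    have hx' : ‖(‖x‖)‖ < 1 := by rwa [Real.norm_eq_abs, abs_of_nonneg (norm_nonneg x)]
    have hs := summable_choose_mul_geometric_of_norm_lt_one (R := ℝ) n hx'
    refine hs.congr fun l => ?_
    rw [cbinom_neg_nat, norm_mul, norm_mul, norm_pow, norm_pow]
    simp [abs_of_nonneg]

lemma key_pointwise (a b : ℤ) (c : ℕ) (z₁ z₂ : ℂ) (hz1 : z₁ ≠ 0) (hz2 : z₂ ≠ 0) (s : ℕ) :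
    (-1:ℂ)^s * cbinom (-b - 1) s * cbinom ((c : ℤ) - a - (s : ℤ)) c *
      z₁ ^ (-b - 1 - (s : ℤ)) * z₂ ^ (a - (c : ℤ) + (s : ℤ) - 1)
    = ∑ k ∈ range (c + 1), (if c - k ≤ s then
        cbinom ((k:ℤ) - a) k * cbinom (-b - 1) (c - k) * z₂ ^ (a - (k:ℤ) - 1) *
          z₁ ^ (-b - 1 - (c:ℤ) + (k:ℤ)) *
          (cbinom (-b - 1 - (c:ℤ) + (k:ℤ)) (s - (c - k)) * (-(z₂ / z₁)) ^ (s - (c - k)))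
      else 0) := by
  have hstep : ∀ k ∈ range (c + 1), (if c - k ≤ s then
        cbinom ((k:ℤ) - a) k * cbinom (-b - 1) (c - k) * z₂ ^ (a - (k:ℤ) - 1) *
          z₁ ^ (-b - 1 - (c:ℤ) + (k:ℤ)) *
          (cbinom (-b - 1 - (c:ℤ) + (k:ℤ)) (s - (c - k)) * (-(z₂ / z₁)) ^ (s - (c - k)))
      else 0)
      = cbinom (a - 1) k * cbinom ((s : ℤ)) (c - k) *
        ((-1:ℂ)^c * cbinom ((s:ℤ) + b) s * z₁ ^ (-b - 1 - (s:ℤ)) *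
          z₂ ^ (a - (c:ℤ) + (s:ℤ) - 1)) := by
    intro k hk
    rw [mem_range] at hk
    by_cases hjs : c - k ≤ s
    · rw [if_pos hjs]
      set l := s - (c - k) with hldef
      have hb1 : cbinom (-b - 1 - (c:ℤ) + (k:ℤ)) l = (-1:ℂ)^l * cbinom ((s:ℤ) + b) l := by
        have h : (l:ℤ) - (-b - 1 - (c:ℤ) + (k:ℤ)) - 1 = (s:ℤ) + b := by omega
        rw [cbinom_neg (-b - 1 - (c:ℤ) + (k:ℤ)) l, h]
      have hb2 : cbinom (-b - 1) (c - k)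
          = (-1:ℂ)^(c - k) * cbinom ((s:ℤ) + b - (l:ℤ)) (c - k) := by
        have h : ((c - k : ℕ):ℤ) - (-b - 1) - 1 = (s:ℤ) + b - (l:ℤ) := by omega
        rw [cbinom_neg (-b - 1) (c - k), h]
      have hb3 : cbinom ((k:ℤ) - a) k = (-1:ℂ)^k * cbinom (a - 1) k := by
        have h : (k:ℤ) - ((k:ℤ) - a) - 1 = a - 1 := by ring
        rw [cbinom_neg ((k:ℤ) - a) k, h]
      have hxl : (-(z₂ / z₁)) ^ l = (-1:ℂ)^l * (z₂ ^ (l:ℤ) * (z₁ ^ (l:ℤ))⁻¹) := by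
        rw [neg_pow, div_pow, zpow_natCast, zpow_natCast]
        ring
      have hz2pow : z₂ ^ (a - (k:ℤ) - 1) * z₂ ^ (l:ℤ) = z₂ ^ (a - (c:ℤ) + (s:ℤ) - 1) := by
        rw [← zpow_add₀ hz2]
        congr 1
        omega
      have hz1pow : z₁ ^ (-b - 1 - (c:ℤ) + (k:ℤ)) * (z₁ ^ (l:ℤ))⁻¹
          = z₁ ^ (-b - 1 - (s:ℤ)) := by
        rw [← zpow_neg, ← zpow_add₀ hz1]
        congr 1
        omega
      have htri : cbinom ((s:ℤ) + b) l * cbinom ((s:ℤ) + b - (l:ℤ)) (c - k)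
          = (s.choose (c - k) : ℂ) * cbinom ((s:ℤ) + b) s := by
        have h1 := cbinom_trinom ((s:ℤ) + b) l (c - k)
        have h2 : l + (c - k) = s := by omega
        rw [h2] at h1
        have h3 : s.choose l = s.choose (c - k) := by
          rw [hldef]
          exact Nat.choose_symm hjs
        rw [h1, h3]
      have hsign : (-1:ℂ)^k * (-1:ℂ)^(c - k) = (-1:ℂ)^c := by
        rw [← pow_add]
        congr 1
        omega
      have hll : (-1:ℂ)^l * (-1:ℂ)^l = 1 := by
        rw [← mul_pow]
        simp
      calc cbinom ((k:ℤ) - a) k * cbinom (-b - 1) (c - k) * z₂ ^ (a - (k:ℤ) - 1) *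
              z₁ ^ (-b - 1 - (c:ℤ) + (k:ℤ)) *
              (cbinom (-b - 1 - (c:ℤ) + (k:ℤ)) l * (-(z₂ / z₁)) ^ l)
          = ((-1:ℂ)^k * (-1:ℂ)^(c - k)) * ((-1:ℂ)^l * (-1:ℂ)^l) * cbinom (a - 1) k *
              (cbinom ((s:ℤ) + b) l * cbinom ((s:ℤ) + b - (l:ℤ)) (c - k)) *
              (z₂ ^ (a - (k:ℤ) - 1) * z₂ ^ (l:ℤ)) *
              (z₁ ^ (-b - 1 - (c:ℤ) + (k:ℤ)) * (z₁ ^ (l:ℤ))⁻¹) := by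
            rw [hb1, hb2, hb3, hxl]
            ring
        _ = (-1:ℂ)^c * 1 * cbinom (a - 1) k *
              ((s.choose (c - k) : ℂ) * cbinom ((s:ℤ) + b) s) *
              z₂ ^ (a - (c:ℤ) + (s:ℤ) - 1) * z₁ ^ (-b - 1 - (s:ℤ)) := by
            rw [hsign, hll, htri, hz2pow, hz1pow]
        _ = cbinom (a - 1) k * cbinom ((s : ℤ)) (c - k) *
              ((-1:ℂ)^c * cbinom ((s:ℤ) + b) s * z₁ ^ (-b - 1 - (s:ℤ)) *
                z₂ ^ (a - (c:ℤ) + (s:ℤ) - 1)) := by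
            rw [cbinom_natCast s (c - k)]
            ring
    · rw [if_neg hjs, cbinom_natCast s (c - k), Nat.choose_eq_zero_of_lt (by omega),
        Nat.cast_zero]
      ring
  rw [Finset.sum_congr rfl hstep, ← Finset.sum_mul, cbinom_vandermonde (a - 1) ((s : ℤ)) c]
  have e1 : (-1:ℂ)^s * cbinom (-b - 1) s = cbinom ((s:ℤ) + b) s := by
    have h : (s:ℤ) - (-b - 1) - 1 = (s:ℤ) + b := by ring
    rw [cbinom_neg (-b - 1) s, h, ← mul_assoc, ← mul_pow]
    simp
  have e2 : cbinom ((c:ℤ) - a - (s:ℤ)) c = (-1:ℂ)^c * cbinom (a - 1 + (s:ℤ)) c := by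
    have h : (c:ℤ) - ((c:ℤ) - a - (s:ℤ)) - 1 = a - 1 + (s:ℤ) := by ring
    rw [cbinom_neg ((c:ℤ) - a - (s:ℤ)) c, h]
  rw [e1, e2]
  ring

theorem delta_identity_coefficients_14_11 (a b : ℤ) (c : ℕ) (z₁ z₂ : ℂ)
    (h₁ : ‖z₂‖ < ‖z₁‖) (h₂ : 0 < ‖z₂‖) :
    Summable (fun l : ℕ => ‖(-1 : ℂ) ^ l * cbinom (-b - 1) l * cbinom ((c : ℤ) - a - (l : ℤ)) c *
        z₁ ^ (-b - 1 - (l : ℤ)) * z₂ ^ (a - (c : ℤ) + (l : ℤ) - 1)‖) ∧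
    ∑' l : ℕ, (-1 : ℂ) ^ l * cbinom (-b - 1) l * cbinom ((c : ℤ) - a - (l : ℤ)) c *
        z₁ ^ (-b - 1 - (l : ℤ)) * z₂ ^ (a - (c : ℤ) + (l : ℤ) - 1)
      = ∑ k ∈ Finset.range (c + 1), cbinom ((k : ℤ) - a) k * cbinom (-b - 1) (c - k) *
        z₂ ^ (a - (k : ℤ) - 1) * (z₁ - z₂) ^ (-b - 1 - (c : ℤ) + (k : ℤ)) := by
  have hz1 : z₁ ≠ 0 := by
    intro h
    rw [h, norm_zero] at h₁
    linarith
  have hz2 : z₂ ≠ 0 := by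
    intro h
    rw [h, norm_zero] at h₂
    exact lt_irrefl 0 h₂
  set x : ℂ := -(z₂ / z₁) with hxdef
  have hx : ‖x‖ < 1 := by
    rw [hxdef, norm_neg, norm_div,
      div_lt_one (lt_trans h₂ h₁)]
    exact h₁
  set F : ℕ → ℕ → ℂ := fun k l =>
    cbinom ((k:ℤ) - a) k * cbinom (-b - 1) (c - k) * z₂ ^ (a - (k:ℤ) - 1) *
      z₁ ^ (-b - 1 - (c:ℤ) + (k:ℤ)) *
      (cbinom (-b - 1 - (c:ℤ) + (k:ℤ)) l * x ^ l) with hF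
  set G : ℕ → ℕ → ℂ := fun k s => if c - k ≤ s then F k (s - (c - k)) else 0 with hG
  have hFsum : ∀ k : ℕ, HasSum (F k)
      (cbinom ((k:ℤ) - a) k * cbinom (-b - 1) (c - k) * z₂ ^ (a - (k:ℤ) - 1) *
        z₁ ^ (-b - 1 - (c:ℤ) + (k:ℤ)) * (1 + x) ^ (-b - 1 - (c:ℤ) + (k:ℤ))) :=
    fun k => (hasSum_cbinom _ hx).mul_left _
  have hinj : ∀ k : ℕ, Function.Injective (fun l : ℕ => l + (c - k)) :=
    fun k => add_left_injective _
  have hcomp : ∀ k l : ℕ, G k (l + (c - k)) = F k l := by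
    intro k l
    simp only [hG, Nat.le_add_left, if_pos, Nat.add_sub_cancel]
  have hsupp : ∀ k : ℕ, ∀ s ∉ Set.range (fun l : ℕ => l + (c - k)), G k s = 0 := by
    intro k s hs
    have hlt : s < c - k := by
      by_contra hcon
      exact hs ⟨s - (c - k), by show s - (c - k) + (c - k) = s; omega⟩
    simp only [hG, if_neg (by omega : ¬ (c - k ≤ s))]
  have hGsum : ∀ k : ℕ, Summable (G k) := by
    intro k
    rw [← Function.Injective.summable_iff (hinj k) (hsupp k)]
    exact (hFsum k).summable.congr fun l => (hcomp k l).symm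
  have hGnorm : ∀ k : ℕ, Summable (fun s => ‖G k s‖) := by
    intro k
    rw [← Function.Injective.summable_iff (hinj k)
      (fun s hs => by rw [hsupp k s hs, norm_zero])]
    have h1 : Summable (fun l : ℕ =>
        ‖cbinom ((k:ℤ) - a) k * cbinom (-b - 1) (c - k) * z₂ ^ (a - (k:ℤ) - 1) *
          z₁ ^ (-b - 1 - (c:ℤ) + (k:ℤ))‖ * ‖cbinom (-b - 1 - (c:ℤ) + (k:ℤ)) l * x ^ l‖) :=
      (summable_norm_cbinom _ hx).mul_left _
    refine h1.congr fun l => ?_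
    show _ = ‖G k (l + (c - k))‖
    rw [hcomp k l]
    exact (norm_mul _ _).symm
  have hGtsum : ∀ k : ℕ, ∑' s, G k s = ∑' l, F k l := by
    intro k
    have h := Function.Injective.tsum_eq (hinj k) (f := G k)
      (fun s hs => by by_contra hcon; exact hs (hsupp k s hcon))
    rw [← h]
    exact tsum_congr fun l => hcomp k l
  have key : ∀ s : ℕ, (-1 : ℂ) ^ s * cbinom (-b - 1) s * cbinom ((c : ℤ) - a - (s : ℤ)) c *
      z₁ ^ (-b - 1 - (s : ℤ)) * z₂ ^ (a - (c : ℤ) + (s : ℤ) - 1)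
      = ∑ k ∈ range (c + 1), G k s := by
    intro s
    rw [key_pointwise a b c z₁ z₂ hz1 hz2 s]
    try exact Finset.sum_congr rfl fun k _ => rfl
  constructor
  · refine Summable.of_nonneg_of_le (fun s => norm_nonneg _) (fun s => ?_)
      (summable_sum (s := range (c + 1)) (fun k _ => hGnorm k))
    rw [key s]
    exact norm_sum_le _ _
  · calc ∑' l : ℕ, (-1 : ℂ) ^ l * cbinom (-b - 1) l * cbinom ((c : ℤ) - a - (l : ℤ)) c *
          z₁ ^ (-b - 1 - (l : ℤ)) * z₂ ^ (a - (c : ℤ) + (l : ℤ) - 1)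
        = ∑' s : ℕ, ∑ k ∈ range (c + 1), G k s := tsum_congr key
      _ = ∑ k ∈ range (c + 1), ∑' s, G k s := Summable.tsum_finsetSum fun k _ => hGsum k
      _ = ∑ k ∈ range (c + 1), ∑' l, F k l := Finset.sum_congr rfl fun k _ => hGtsum k
      _ = ∑ k ∈ range (c + 1),
            cbinom ((k:ℤ) - a) k * cbinom (-b - 1) (c - k) * z₂ ^ (a - (k:ℤ) - 1) *
              z₁ ^ (-b - 1 - (c:ℤ) + (k:ℤ)) * (1 + x) ^ (-b - 1 - (c:ℤ) + (k:ℤ)) :=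
          Finset.sum_congr rfl fun k _ => (hFsum k).tsum_eq
      _ = ∑ k ∈ Finset.range (c + 1), cbinom ((k : ℤ) - a) k * cbinom (-b - 1) (c - k) *
            z₂ ^ (a - (k : ℤ) - 1) * (z₁ - z₂) ^ (-b - 1 - (c : ℤ) + (k : ℤ)) := by
          refine Finset.sum_congr rfl fun k _ => ?_
          have hzz : z₁ - z₂ = z₁ * (1 + x) := by
            rw [hxdef]
            field_simp
            try ring
          rw [hzz, mul_zpow]
          ring
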